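/- Let a ∈ ℤ and let t ∈ ℚ satisfy t² + t·a + 24t - 42a + 108 = 0. Then t ∈ ℤ and (t - 42)(t + a + 66) = -2880. -/
import Mathlib

open Polynomial in
/-- Diophantine reduction for the indicial root `α = -s/24 - 1/20` of (♭_s):
if `t ∈ ℚ` satisfies the monic integer quadratic `t² + t·a + 24t - 42a + 108 = 0`
with `a ∈ ℤ`, then `t` is an integer and `(t - 42)(t + a + 66) = -2880`. -/
theorem diophantine_reduction_case1 (a : ℤ) (t : ℚ)
    (h : t^2 + t * a + 24 * t - 42 * a + 108 = 0) :
    (∃ n : ℤ, t = n) ∧ (t - 42) * (t + a + 66) = -2880 := by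
  constructor
  · have hint : IsIntegral ℤ t := by
      refine ⟨X^2 + C (a + 24) * X + C (108 - 42 * a), ?_, ?_⟩
      · monicity!
      · simp only [Polynomial.aeval_def, Polynomial.eval₂_add, Polynomial.eval₂_sub,
          Polynomial.eval₂_mul, Polynomial.eval₂_pow, Polynomial.eval₂_X, Polynomial.eval₂_C]
        simp only [algebraMap_int_eq, eq_intCast]
        push_cast
        linear_combination h
    obtain ⟨n, hn⟩ := IsIntegrallyClosed.isIntegral_iff.mp hint
    exact ⟨n, hn.symm⟩
  · linear_combination h
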